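/- arXiv:1411.6554 — 3 statements merged into one kernel-verified Lean document; each statement's English description precedes it below -/
import Mathlib

section
/- Let k be a positive integer, let H be a graph with vertex cover number τ(H) ≥ 4k−3, and let {x_1,y_1},…,{x_k,y_k} be k pairs of distinct vertices of H. Then there is a matching M = {m_1,…,m_k} of size k in H such that for all i ≠ j the edge m_i contains no vertex of {x_j,y_j}. -/
universe u

variable {V : Type u}

/-- A graph is `k`-connected if it has more than `k` vertices and deleting any
set of fewer than `k` vertices leaves a connected graph. -/
def KConnected (G : SimpleGraph V) (k : ℕ) : Prop :=
  k < Nat.card V ∧ ∀ X : Set V, X.ncard < k → (G.induce Xᶜ).Connected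

/-- A graph is bipartite if it is 2-colorable. -/
def Bipartite (G : SimpleGraph V) : Prop := G.Colorable 2

/-- `X` is an odd cycle cover of `G` if `G - X` is bipartite. -/
def IsOddCycleCover (G : SimpleGraph V) (X : Set V) : Prop :=
  Bipartite (G.induce Xᶜ)

/-- `X` is a minimum odd cycle cover of `G`. -/
def IsMinOddCycleCover (G : SimpleGraph V) (X : Set V) : Prop :=
  IsOddCycleCover G X ∧ ∀ Y : Set V, IsOddCycleCover G Y → X.ncard ≤ Y.ncard

/-- The odd cycle cover `X` induces the partition `(A, B)`:
`(A \ X, B \ X)` is a bipartition of `G - X`, and a vertex of `X` lies in `A`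
(resp. `B`) if it has more neighbours in `B \ X` than in `A \ X`
(resp. more neighbours in `A \ X` than in `B \ X`). -/
def InducesPartition (G : SimpleGraph V) (X A B : Set V) : Prop :=
  (∀ u v, G.Adj u v → u ∉ X → v ∉ X → ¬(u ∈ A ∧ v ∈ A) ∧ ¬(u ∈ B ∧ v ∈ B)) ∧
  (∀ x ∈ X,
    ({y | G.Adj x y ∧ y ∈ A \ X}.ncard < {y | G.Adj x y ∧ y ∈ B \ X}.ncard → x ∈ A) ∧
    ({y | G.Adj x y ∧ y ∈ B \ X}.ncard < {y | G.Adj x y ∧ y ∈ A \ X}.ncard → x ∈ B))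

/-- `(A, B)` is a nice partition of `G`. -/
def IsNicePartition (G : SimpleGraph V) (A B : Set V) : Prop :=
  A ∪ B = Set.univ ∧ Disjoint A B ∧
    ∃ X : Set V, IsMinOddCycleCover G X ∧ InducesPartition G X A B

/-- The graph `G_{A,B} = G[A] ∪ G[B]`: edges of `G` with both ends in `A` or both in `B`. -/
def sideGraph (G : SimpleGraph V) (A B : Set V) : SimpleGraph V where
  Adj u v := G.Adj u v ∧ ((u ∈ A ∧ v ∈ A) ∨ (u ∈ B ∧ v ∈ B))
  symm := by
    constructor
    intro u v h
    exact ⟨h.1.symm, by tauto⟩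
  loopless := by
    constructor
    intro v h
    exact G.irrefl h.1

/-- A parity breaking matching for `(S, I)` with respect to `(A, B)`, where
`S = {{s i, t i} : i}`: a matching `{m i : i ∈ I}` of edges of `G_{A,B}` such that
`m i` contains no vertex of `{s j, t j}` for `j ≠ i`. -/
def ParityBreakingMatching (G : SimpleGraph V) (A B : Set V) {k : ℕ}
    (s t : Fin k → V) (I : Finset (Fin k)) (m : Fin k → Sym2 V) : Prop :=
  (∀ i ∈ I, m i ∈ (sideGraph G A B).edgeSet) ∧
  (∀ i ∈ I, ∀ j ∈ I, i ≠ j → ∀ x ∈ m i, x ∉ m j) ∧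
  (∀ i ∈ I, ∀ j : Fin k, j ≠ i → s j ∉ m i ∧ t j ∉ m i)

/-- `P` is a family of pairwise vertex-disjoint paths, `P i` connecting `s i` and `t i`. -/
def DisjointPaths {k : ℕ} (G : SimpleGraph V) (s t : Fin k → V)
    (P : ∀ i, G.Walk (s i) (t i)) : Prop :=
  (∀ i, (P i).IsPath) ∧ ∀ i j, i ≠ j → ∀ x ∈ (P i).support, x ∉ (P j).support

/-- `G` is `k`-linked. -/
def KLinked (G : SimpleGraph V) (k : ℕ) : Prop :=
  ∀ s t : Fin k → V, Function.Injective (Sum.elim s t) →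
    ∃ P : ∀ i, G.Walk (s i) (t i), DisjointPaths G s t P

/-- `G` is parity-`k`-linked. -/
def ParityKLinked (G : SimpleGraph V) (k : ℕ) : Prop :=
  ∀ s t : Fin k → V, Function.Injective (Sum.elim s t) →
    ∀ p : Fin k → Bool,
      ∃ P : ∀ i, G.Walk (s i) (t i), DisjointPaths G s t P ∧
        ∀ i, (Odd (P i).length ↔ p i = true)

/-- A set of vertices is independent if no edge joins two of its vertices. -/
def IsIndepSet' (G : SimpleGraph V) (s : Set V) : Prop :=
  ∀ x ∈ s, ∀ y ∈ s, ¬ G.Adj x y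

/-- `G` is parity-`k`-linked restricted to independent sets. -/
def ParityKLinkedIndep (G : SimpleGraph V) (k : ℕ) : Prop :=
  ∀ s t : Fin k → V, Function.Injective (Sum.elim s t) →
    IsIndepSet' G (Set.range s ∪ Set.range t) →
    ∀ p : Fin k → Bool,
      ∃ P : ∀ i, G.Walk (s i) (t i), DisjointPaths G s t P ∧
        ∀ i, (Odd (P i).length ↔ p i = true)

/-- `G` contains `k` pairwise vertex-disjoint odd `S`-cycles. -/
def HasDisjointOddSCycles (G : SimpleGraph V) (S : Set V) (k : ℕ) : Prop :=
  ∃ (v : Fin k → V) (c : ∀ i, G.Walk (v i) (v i)),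
    (∀ i, (c i).IsCycle ∧ Odd (c i).length ∧ ∃ x ∈ S, x ∈ (c i).support) ∧
    ∀ i j, i ≠ j → ∀ x ∈ (c i).support, x ∉ (c j).support

/-- `G` contains an odd `S`-cycle. -/
def HasOddSCycle (G : SimpleGraph V) (S : Set V) : Prop :=
  ∃ (v : V) (c : G.Walk v v), c.IsCycle ∧ Odd c.length ∧ ∃ x ∈ S, x ∈ c.support

/-- `G` contains `k` pairwise vertex-disjoint odd cycles. -/
def HasDisjointOddCycles (G : SimpleGraph V) (k : ℕ) : Prop :=
  ∃ (v : Fin k → V) (c : ∀ i, G.Walk (v i) (v i)),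
    (∀ i, (c i).IsCycle ∧ Odd (c i).length) ∧
    ∀ i j, i ≠ j → ∀ x ∈ (c i).support, x ∉ (c j).support

/-- `C` is a vertex cover of `G`. -/
def IsVertexCover (G : SimpleGraph V) (C : Set V) : Prop :=
  ∀ e ∈ G.edgeSet, ∃ v ∈ C, v ∈ e

/-- The vertex cover number `τ(G)`. -/
noncomputable def vcNumber (G : SimpleGraph V) : ℕ :=
  sInf {n | ∃ C : Set V, IsVertexCover G C ∧ C.ncard = n}

/-- `P` is an odd `Z`-path: a path of odd length whose vertex set meets `Z`
exactly in its two end vertices. -/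
def IsOddZPath (G : SimpleGraph V) (Z : Set V) {u v : V} (P : G.Walk u v) : Prop :=
  P.IsPath ∧ Odd P.length ∧ u ∈ Z ∧ v ∈ Z ∧
    ∀ x ∈ P.support, x ∈ Z → x = u ∨ x = v

theorem stmt10 {V : Type u} [Fintype V] (k : ℕ) (hk : 0 < k) (H : SimpleGraph V)
    (htau : 4 * k - 3 ≤ vcNumber H)
    (x y : Fin k → V) (hxy : ∀ i, x i ≠ y i) :
    ∃ m : Fin k → Sym2 V,
      (∀ i, m i ∈ H.edgeSet) ∧
      (∀ i j, i ≠ j → ∀ v ∈ m i, v ∉ m j) ∧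
      (∀ i j, i ≠ j → x j ∉ m i ∧ y j ∉ m i) := by
  classical
  suffices h : ∀ n, n ≤ k → ∃ a b : Fin k → V,
      (∀ i : Fin k, (i : ℕ) < n → H.Adj (a i) (b i)) ∧
      (∀ i j : Fin k, (i : ℕ) < n → (j : ℕ) < n → i ≠ j →
        a i ≠ a j ∧ a i ≠ b j ∧ b i ≠ a j ∧ b i ≠ b j) ∧
      (∀ i : Fin k, (i : ℕ) < n → ∀ j : Fin k, j ≠ i →
        x j ≠ a i ∧ x j ≠ b i ∧ y j ≠ a i ∧ y j ≠ b i) by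
    obtain ⟨a, b, h1, h2, h3⟩ := h k le_rfl
    refine ⟨fun i => s(a i, b i), fun i => (h1 i i.isLt), ?_, ?_⟩
    · intro i j hij v hv hv'
      rw [Sym2.mem_iff] at hv hv'
      obtain ⟨d1, d2, d3, d4⟩ := h2 i j i.isLt j.isLt hij
      rcases hv with rfl | rfl <;> rcases hv' with h | h <;> tauto
    · intro i j hij
      obtain ⟨d1, d2, d3, d4⟩ := h3 i i.isLt j hij.symm
      constructor <;> · rw [Sym2.mem_iff]; push_neg; tauto
  intro n
  induction n with
  | zero =>
    exact fun _ => ⟨x, y, fun i hi => absurd hi (by omega),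
      fun i j hi => absurd hi (by omega), fun i hi => absurd hi (by omega)⟩
  | succ n ih =>
    intro hn1
    have hn : n < k := hn1
    obtain ⟨a, b, h1, h2, h3⟩ := ih (le_of_lt hn)
    set i₀ : Fin k := ⟨n, hn⟩ with hi₀
    set F : Finset V :=
      ((Finset.univ.filter fun j : Fin k => (j : ℕ) < n).image a) ∪
      ((Finset.univ.filter fun j : Fin k => (j : ℕ) < n).image b) ∪
      ((Finset.univ.erase i₀).image x) ∪
      ((Finset.univ.erase i₀).image y) with hF
    have hfil : (Finset.univ.filter fun j : Fin k => (j : ℕ) < n).card ≤ n := by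
      have := Finset.card_le_card_of_injOn
        (s := Finset.univ.filter fun j : Fin k => (j : ℕ) < n) (t := Finset.range n) Fin.val
        (fun j hj => by simp at hj ⊢; exact hj) (Fin.val_injective.injOn)
      simpa using this
    have he1 : (Finset.univ.erase i₀).card = k - 1 := by
      rw [Finset.card_erase_of_mem (Finset.mem_univ _), Finset.card_univ, Fintype.card_fin]
    have hFcard : F.card ≤ 4 * k - 4 := by
      have c1 := Finset.card_image_le (s := Finset.univ.filter fun j : Fin k => (j : ℕ) < n) (f := a)
      have c2 := Finset.card_image_le (s := Finset.univ.filter fun j : Fin k => (j : ℕ) < n) (f := b)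
      have c3 := Finset.card_image_le (s := Finset.univ.erase i₀) (f := x)
      have c4 := Finset.card_image_le (s := Finset.univ.erase i₀) (f := y)
      have u1 := Finset.card_union_le
        (((Finset.univ.filter fun j : Fin k => (j : ℕ) < n).image a) ∪
         ((Finset.univ.filter fun j : Fin k => (j : ℕ) < n).image b) ∪
         ((Finset.univ.erase i₀).image x)) ((Finset.univ.erase i₀).image y)
      have u2 := Finset.card_union_le
        (((Finset.univ.filter fun j : Fin k => (j : ℕ) < n).image a) ∪
         ((Finset.univ.filter fun j : Fin k => (j : ℕ) < n).image b))
        ((Finset.univ.erase i₀).image x)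
      have u3 := Finset.card_union_le
        ((Finset.univ.filter fun j : Fin k => (j : ℕ) < n).image a)
        ((Finset.univ.filter fun j : Fin k => (j : ℕ) < n).image b)
      rw [hF]
      omega
    have hnc : ¬ IsVertexCover H (↑F : Set V) := by
      intro hcov
      have hle : vcNumber H ≤ F.card :=
        Nat.sInf_le ⟨↑F, hcov, Set.ncard_coe_finset F⟩
      omega
    rw [IsVertexCover] at hnc
    push_neg at hnc
    obtain ⟨e, he, hP⟩ := hnc
    revert he hP
    induction e using Sym2.ind with
    | _ u v =>
      intro he hP
      rw [SimpleGraph.mem_edgeSet] at he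
      have hu : ∀ w ∈ F, w ≠ u ∧ w ≠ v := by
        intro w hw
        have := hP w (by simpa using hw)
        rw [Sym2.mem_iff] at this
        push_neg at this
        exact this
      have haF : ∀ j : Fin k, (j : ℕ) < n → a j ∈ F ∧ b j ∈ F := by
        intro j hj
        rw [hF]
        constructor
        · exact Finset.mem_union_left _ (Finset.mem_union_left _ (Finset.mem_union_left _
            (Finset.mem_image_of_mem a (by simp [hj]))))
        · exact Finset.mem_union_left _ (Finset.mem_union_left _ (Finset.mem_union_right _
            (Finset.mem_image_of_mem b (by simp [hj]))))
      have hxF : ∀ j : Fin k, j ≠ i₀ → x j ∈ F ∧ y j ∈ F := by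
        intro j hj
        rw [hF]
        constructor
        · exact Finset.mem_union_left _ (Finset.mem_union_right _
            (Finset.mem_image_of_mem x (by simp [hj])))
        · exact Finset.mem_union_right _ (Finset.mem_image_of_mem y (by simp [hj]))
      have hlt : ∀ i : Fin k, (i : ℕ) < n + 1 → i ≠ i₀ → (i : ℕ) < n := by
        intro i hi hne
        have : (i : ℕ) ≠ n := fun h => hne (Fin.ext h)
        omega
      refine ⟨Function.update a i₀ u, Function.update b i₀ v, ?_, ?_, ?_⟩
      · intro i hi
        by_cases hie : i = i₀
        · subst hie; simp [he]
        · rw [Function.update_of_ne hie, Function.update_of_ne hie]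
          exact h1 i (hlt i hi hie)
      · intro i j hi hj hij
        by_cases hie : i = i₀
        · subst hie
          have hje : j ≠ i₀ := fun h => hij (h ▸ rfl)
          rw [Function.update_self, Function.update_self,
            Function.update_of_ne hje, Function.update_of_ne hje]
          obtain ⟨hja, hjb⟩ := haF j (hlt j hj hje)
          obtain ⟨p1, p2⟩ := hu _ hja
          obtain ⟨q1, q2⟩ := hu _ hjb
          exact ⟨p1.symm, q1.symm, p2.symm, q2.symm⟩
        · by_cases hje : j = i₀
          · subst hje
            rw [Function.update_self, Function.update_self,
              Function.update_of_ne hie, Function.update_of_ne hie]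
            obtain ⟨hia, hib⟩ := haF i (hlt i hi hie)
            obtain ⟨p1, p2⟩ := hu _ hia
            obtain ⟨q1, q2⟩ := hu _ hib
            exact ⟨p1, p2, q1, q2⟩
          · rw [Function.update_of_ne hie, Function.update_of_ne hie,
              Function.update_of_ne hje, Function.update_of_ne hje]
            exact h2 i j (hlt i hi hie) (hlt j hj hje) hij
      · intro i hi j hj
        by_cases hie : i = i₀
        · subst hie
          rw [Function.update_self, Function.update_self]
          obtain ⟨hjx, hjy⟩ := hxF j hj
          obtain ⟨p1, p2⟩ := hu _ hjx
          obtain ⟨q1, q2⟩ := hu _ hjy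
          exact ⟨p1, p2, q1, q2⟩
        · rw [Function.update_of_ne hie, Function.update_of_ne hie]
          exact h3 i (hlt i hi hie) j hj
end

section
/- Let k be a positive integer and let H be a graph with vertex cover number τ(H) ≥ 2k−1. Let {x_1,y_1},…,{x_k,y_k} be k pairs of vertices of H such that Z = {x_1,…,x_k,y_1,…,y_k} is an independent set of size 2k. Then there is a matching M = {m_1,…,m_k} of size k in H such that for all i ≠ j the edge m_i contains no vertex of {x_j,y_j}. -/
universe u

variable {V : Type u}

theorem stmt11 {V : Type u} [Fintype V] (k : ℕ) (hk : 0 < k) (H : SimpleGraph V)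
    (htau : 2 * k - 1 ≤ vcNumber H)
    (x y : Fin k → V) (hxy : Function.Injective (Sum.elim x y))
    (hindep : IsIndepSet' H (Set.range x ∪ Set.range y)) :
    ∃ m : Fin k → Sym2 V,
      (∀ i, m i ∈ H.edgeSet) ∧
      (∀ i j, i ≠ j → ∀ v ∈ m i, v ∉ m j) ∧
      (∀ i j, i ≠ j → x j ∉ m i ∧ y j ∉ m i) := by
    classical
  set Z : Set V := Set.range x ∪ Set.range y with hZdef
  have hxinj : ∀ i j : Fin k, x i = x j → i = j := by
    intro i j h
    have := hxy (a₁ := Sum.inl i) (a₂ := Sum.inl j) (by simpa using h)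
    simpa using this
  have hyinj : ∀ i j : Fin k, y i = y j → i = j := by
    intro i j h
    have := hxy (a₁ := Sum.inr i) (a₂ := Sum.inr j) (by simpa using h)
    simpa using this
  have hxyne : ∀ i j : Fin k, x i ≠ y j := by
    intro i j h
    have := hxy (a₁ := Sum.inl i) (a₂ := Sum.inr j) (by simpa using h)
    simpa using this
  have hxZ : ∀ i, x i ∈ Z := fun i => Or.inl ⟨i, rfl⟩
  have hyZ : ∀ i, y i ∈ Z := fun i => Or.inr ⟨i, rfl⟩
  have hZne : ∀ (i j : Fin k) (c c' : V), i ≠ j → (c = x i ∨ c = y i) →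
      (c' = x j ∨ c' = y j) → c ≠ c' := by
    rintro i j c c' hij (rfl | rfl) (rfl | rfl) h
    · exact hij (hxinj _ _ h)
    · exact hxyne i j h
    · exact hxyne j i h.symm
    · exact hij (hyinj _ _ h)
  have hcov : ∀ C : Finset V, C.card ≤ 2 * k - 2 → ¬ IsVertexCover H (↑C : Set V) := by
    intro C hC hcover
    have h1 : vcNumber H ≤ C.card := Nat.sInf_le ⟨↑C, hcover, Set.ncard_coe_finset C⟩
    omega
  have hfilter2 : ∀ z : Sym2 V, (Finset.univ.filter (fun w => w ∈ z)).card ≤ 2 := by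
    intro z
    induction z using Sym2.ind with
    | _ a b =>
      have h : (Finset.univ.filter (fun w => w ∈ s(a, b))) = {a, b} := by
        ext w; simp [Sym2.mem_iff]
      rw [h]
      exact (Finset.card_insert_le a {b}).trans (by simp)
  have main : ∀ t d (e' : Fin d → Sym2 V), k ≤ t + d →
      (∀ r, e' r ∈ H.edgeSet) →
      (∀ r r' : Fin d, r ≠ r' → ∀ v ∈ e' r, v ∉ e' r') →
      (∀ (r : Fin d) (v : V), v ∈ e' r → v ∉ Z) →
      ∃ m : Fin k → Sym2 V,
        (∀ i, m i ∈ H.edgeSet) ∧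
        (∀ i j, i ≠ j → ∀ v ∈ m i, v ∉ m j) ∧
        (∀ i j, i ≠ j → x j ∉ m i ∧ y j ∉ m i) := by
    intro t
    induction t with
    | zero =>
      intro d e' hkd he hdisj hZfree
      refine ⟨fun i => e' (Fin.castLE (by omega) i), fun i => he _, ?_, ?_⟩
      · intro i j hij v hv hv'
        exact hdisj _ _ (fun h => hij (Fin.castLE_injective _ h)) v hv hv'
      · intro i j hij
        exact ⟨fun h => hZfree _ _ h (hxZ j), fun h => hZfree _ _ h (hyZ j)⟩
    | succ t ih =>
      intro d e' hkd he hdisj hZfree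
      by_cases hex : ∃ u v, H.Adj u v ∧ (u ∉ Z ∧ ∀ r, u ∉ e' r) ∧ (v ∉ Z ∧ ∀ r, v ∉ e' r)
      · obtain ⟨u, v, huv, ⟨huZ, huF⟩, ⟨hvZ, hvF⟩⟩ := hex
        refine ih (d + 1) (Fin.cons s(u, v) e') (by omega) ?_ ?_ ?_
        · intro r
          rcases Fin.eq_zero_or_eq_succ r with rfl | ⟨r0, rfl⟩
          · simpa using huv
          · simpa using he r0
        · intro r r' hne w hw hw'
          rcases Fin.eq_zero_or_eq_succ r with rfl | ⟨r0, rfl⟩ <;>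
            rcases Fin.eq_zero_or_eq_succ r' with rfl | ⟨r1, rfl⟩
          · exact hne rfl
          · simp only [Fin.cons_zero] at hw
            simp only [Fin.cons_succ] at hw'
            rcases Sym2.mem_iff.mp hw with rfl | rfl
            · exact huF r1 hw'
            · exact hvF r1 hw'
          · simp only [Fin.cons_succ] at hw
            simp only [Fin.cons_zero] at hw'
            rcases Sym2.mem_iff.mp hw' with rfl | rfl
            · exact huF r0 hw
            · exact hvF r0 hw
          · simp only [Fin.cons_succ] at hw hw'
            exact hdisj r0 r1 (fun h => hne (by rw [h])) w hw hw'
        · intro r w hw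
          rcases Fin.eq_zero_or_eq_succ r with rfl | ⟨r0, rfl⟩
          · simp only [Fin.cons_zero] at hw
            rcases Sym2.mem_iff.mp hw with rfl | rfl
            · exact huZ
            · exact hvZ
          · simp only [Fin.cons_succ] at hw
            exact hZfree r0 w hw
      · push_neg at hex
        set F : Finset V := Finset.univ.filter (fun w => ∃ r, w ∈ e' r) with hFdef
        have hFmem : ∀ w : V, w ∈ F ↔ ∃ r, w ∈ e' r := by
          intro w; simp [hFdef]
        have hFcard : F.card ≤ 2 * d := by
          have hsub : F ⊆ Finset.univ.biUnion
              (fun r : Fin d => Finset.univ.filter (fun w => w ∈ e' r)) := by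
            intro w hw
            obtain ⟨r, hr⟩ := (hFmem w).mp hw
            exact Finset.mem_biUnion.mpr ⟨r, Finset.mem_univ r, by simp [hr]⟩
          calc F.card ≤ _ := Finset.card_le_card hsub
            _ ≤ ∑ r : Fin d, (Finset.univ.filter (fun w => w ∈ e' r)).card :=
                Finset.card_biUnion_le
            _ ≤ ∑ _r : Fin d, 2 := Finset.sum_le_sum (fun r _ => hfilter2 (e' r))
            _ = 2 * d := by simp [mul_comm]
        set N : Fin k → Finset V := fun i => Finset.univ.filter
          (fun w => w ∉ Z ∧ (∀ r, w ∉ e' r) ∧ (H.Adj (x i) w ∨ H.Adj (y i) w)) with hNdef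
        have hNmem : ∀ i w, w ∈ N i ↔
            (w ∉ Z ∧ (∀ r, w ∉ e' r) ∧ (H.Adj (x i) w ∨ H.Adj (y i) w)) := by
          intro i w; simp [hNdef]
        have hallsN : ∀ S : Finset (Fin k), S.card ≤ (S.biUnion N).card + d := by
          intro S
          by_contra hS
          push_neg at hS
          set B : Finset V := Sᶜ.biUnion (fun i => ({x i, y i} : Finset V)) with hBdef
          have hBcard : B.card ≤ 2 * Sᶜ.card := by
            calc B.card ≤ ∑ i ∈ Sᶜ, ({x i, y i} : Finset V).card := Finset.card_biUnion_le
              _ ≤ ∑ _i ∈ Sᶜ, 2 :=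
                  Finset.sum_le_sum (fun i _ => (Finset.card_insert_le _ _).trans (by simp))
              _ = 2 * Sᶜ.card := by rw [Finset.sum_const, smul_eq_mul, Nat.mul_comm]
          have hScompl : Sᶜ.card = k - S.card := by
            rw [Finset.card_compl]; simp
          have hSk : S.card ≤ k := by
            have := Finset.card_le_univ S; simpa using this
          set C : Finset V := (S.biUnion N) ∪ F ∪ B with hCdef
          have hCcard : C.card ≤ 2 * k - 2 := by
            have h1 : C.card ≤ (S.biUnion N).card + F.card + B.card := by
              calc C.card ≤ ((S.biUnion N) ∪ F).card + B.card := Finset.card_union_le _ _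
                _ ≤ (S.biUnion N).card + F.card + B.card := by
                    have := Finset.card_union_le (S.biUnion N) F
                    omega
            omega
          refine hcov C hCcard ?_
          intro e heE
          have key : ∀ a b : V, H.Adj a b → a ∈ Z → ∃ w ∈ (↑C : Set V), w ∈ s(a, b) := by
            intro a b hab haZ
            have hbZ : b ∉ Z := fun hb => hindep a haZ b hb hab
            have hpair : ∃ i, a = x i ∨ a = y i := by
              rcases haZ with ⟨i, hi⟩ | ⟨i, hi⟩
              exacts [⟨i, Or.inl hi.symm⟩, ⟨i, Or.inr hi.symm⟩]
            obtain ⟨i, hi⟩ := hpair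
            by_cases hiS : i ∈ S
            · by_cases hbF : ∃ r, b ∈ e' r
              · refine ⟨b, ?_, by simp⟩
                have hb : b ∈ F := (hFmem b).mpr hbF
                simp only [hCdef, Finset.coe_union, Set.mem_union, Finset.mem_coe]
                tauto
              · have hbN : b ∈ N i := by
                  rw [hNmem]
                  refine ⟨hbZ, fun r hr => hbF ⟨r, hr⟩, ?_⟩
                  rcases hi with rfl | rfl
                  · exact Or.inl hab
                  · exact Or.inr hab
                refine ⟨b, ?_, by simp⟩
                have hb : b ∈ S.biUnion N := Finset.mem_biUnion.mpr ⟨i, hiS, hbN⟩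
                simp only [hCdef, Finset.coe_union, Set.mem_union, Finset.mem_coe]
                tauto
            · refine ⟨a, ?_, by simp⟩
              have ha : a ∈ B := Finset.mem_biUnion.mpr
                ⟨i, Finset.mem_compl.mpr hiS, by rcases hi with rfl | rfl <;> simp⟩
              simp only [hCdef, Finset.coe_union, Set.mem_union, Finset.mem_coe]
              tauto
          revert heE
          induction e using Sym2.ind with
          | _ a b =>
            intro heE
            rw [SimpleGraph.mem_edgeSet] at heE
            by_cases haZ : a ∈ Z
            · exact key a b heE haZ
            by_cases hbZ : b ∈ Z
            · obtain ⟨w, hw1, hw2⟩ := key b a heE.symm hbZ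
              exact ⟨w, hw1, by rwa [Sym2.eq_swap]⟩
            by_cases haF : ∃ r, a ∈ e' r
            · refine ⟨a, ?_, by simp⟩
              have ha : a ∈ F := (hFmem a).mpr haF
              simp only [hCdef, Finset.coe_union, Set.mem_union, Finset.mem_coe]
              tauto
            · obtain ⟨r, hr⟩ := hex a b heE ⟨haZ, fun r hra => haF ⟨r, hra⟩⟩ hbZ
              refine ⟨b, ?_, by simp⟩
              have hb : b ∈ F := (hFmem b).mpr ⟨r, hr⟩
              simp only [hCdef, Finset.coe_union, Set.mem_union, Finset.mem_coe]
              tauto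
        set t' : Fin k → Finset (V ⊕ Fin d) := fun i =>
          (N i).map ⟨Sum.inl, Sum.inl_injective⟩ ∪
            Finset.univ.map ⟨Sum.inr, Sum.inr_injective⟩ with ht'def
        have hall2 : ∀ S : Finset (Fin k), S.card ≤ (S.biUnion t').card := by
          intro S
          rcases S.eq_empty_or_nonempty with rfl | hne
          · simp
          · have hset : S.biUnion t' =
                ((S.biUnion N).map ⟨Sum.inl, Sum.inl_injective⟩) ∪
                  Finset.univ.map ⟨Sum.inr, Sum.inr_injective⟩ := by
              ext z
              simp only [ht'def, Finset.mem_biUnion, Finset.mem_union, Finset.mem_map,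
                Function.Embedding.coeFn_mk]
              constructor
              · rintro ⟨i, hiS, ⟨w, hw, rfl⟩ | h⟩
                · exact Or.inl ⟨w, ⟨i, hiS, hw⟩, rfl⟩
                · exact Or.inr h
              · rintro (⟨w, hw, rfl⟩ | h)
                · obtain ⟨i, hiS, hwN⟩ := hw
                  exact ⟨i, hiS, Or.inl ⟨w, hwN, rfl⟩⟩
                · obtain ⟨i, hiS⟩ := hne
                  exact ⟨i, hiS, Or.inr h⟩
            rw [hset, Finset.card_union_of_disjoint]
            · simp only [Finset.card_map, Finset.card_univ, Fintype.card_fin]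
              exact hallsN S
            · rw [Finset.disjoint_left]
              rintro z hz1 hz2
              obtain ⟨w, _, rfl⟩ := Finset.mem_map.mp hz1
              obtain ⟨r, _, hr⟩ := Finset.mem_map.mp hz2
              exact absurd hr (by simp)
        obtain ⟨f, hfinj, hfmem⟩ :=
          (Finset.all_card_le_biUnion_card_iff_exists_injective t').mp hall2
        set m : Fin k → Sym2 V := fun i =>
          Sum.elim (fun w => if H.Adj (x i) w then s(x i, w) else s(y i, w)) e' (f i) with hmdef
        have hP : ∀ i, (∃ c w, (c = x i ∨ c = y i) ∧ m i = s(c, w) ∧ H.Adj c w ∧ w ∉ Z ∧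
            (∀ r, w ∉ e' r) ∧ f i = Sum.inl w) ∨ (∃ r, m i = e' r ∧ f i = Sum.inr r) := by
          intro i
          have hf := hfmem i
          cases hfi : f i with
          | inl w =>
            rw [hfi] at hf
            have hwN : w ∈ N i := by
              simp only [ht'def, Finset.mem_union, Finset.mem_map,
                Function.Embedding.coeFn_mk] at hf
              rcases hf with ⟨w', hw', h⟩ | ⟨r, _, h⟩
              · obtain rfl : w' = w := by simpa using h
                exact hw'
              · exact absurd h (by simp)
            rw [hNmem] at hwN
            obtain ⟨hwZ, hwF, hadj⟩ := hwN
            by_cases hax : H.Adj (x i) w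
            · exact Or.inl ⟨x i, w, Or.inl rfl, by simp [hmdef, hfi, hax], hax, hwZ, hwF, rfl⟩
            · have hay : H.Adj (y i) w := hadj.resolve_left hax
              exact Or.inl ⟨y i, w, Or.inr rfl, by simp [hmdef, hfi, hax], hay, hwZ, hwF, rfl⟩
          | inr r => exact Or.inr ⟨r, by simp [hmdef, hfi], rfl⟩
        refine ⟨m, ?_, ?_, ?_⟩
        · intro i
          rcases hP i with ⟨c, w, _, hmi, hadj, _⟩ | ⟨r, hmi, _⟩
          · rw [hmi]; exact hadj
          · rw [hmi]; exact he r
        · intro i j hij v hvi hvj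
          rcases hP i with ⟨c, w, hc, hmi, hadjc, hwZ, hwF, hfi⟩ | ⟨r, hmi, hfi⟩ <;>
            rcases hP j with ⟨c', w', hc', hmj, hadjc', hwZ', hwF', hfj⟩ | ⟨r', hmj, hfj⟩
          · rw [hmi] at hvi; rw [hmj] at hvj
            have hcZ : c ∈ Z := by rcases hc with rfl | rfl; exacts [hxZ i, hyZ i]
            have hcZ' : c' ∈ Z := by rcases hc' with rfl | rfl; exacts [hxZ j, hyZ j]
            rcases Sym2.mem_iff.mp hvi with hv | hv <;>
              rcases Sym2.mem_iff.mp hvj with hv' | hv'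
            · exact hZne i j c c' hij hc hc' (by rw [← hv, hv'])
            · exact hwZ' (by rw [← hv', hv]; exact hcZ)
            · exact hwZ (by rw [← hv, hv']; exact hcZ')
            · apply hij
              apply hfinj
              rw [hfi, hfj]
              have hww : w = w' := by rw [← hv, hv']
              rw [hww]
          · rw [hmi] at hvi; rw [hmj] at hvj
            have hcZ : c ∈ Z := by rcases hc with rfl | rfl; exacts [hxZ i, hyZ i]
            rcases Sym2.mem_iff.mp hvi with hv | hv
            · exact hZfree r' v hvj (by rw [hv]; exact hcZ)
            · rw [hv] at hvj; exact hwF r' hvj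
          · rw [hmi] at hvi; rw [hmj] at hvj
            have hcZ' : c' ∈ Z := by rcases hc' with rfl | rfl; exacts [hxZ j, hyZ j]
            rcases Sym2.mem_iff.mp hvj with hv' | hv'
            · rw [hv'] at hvi; exact hZfree r c' hvi hcZ'
            · rw [hv'] at hvi; exact hwF' r hvi
          · rw [hmi] at hvi; rw [hmj] at hvj
            have hrr : r ≠ r' := by
              intro h
              apply hij
              apply hfinj
              rw [hfi, hfj, h]
            exact hdisj r r' hrr v hvi hvj
        · intro i j hij
          rcases hP i with ⟨c, w, hc, hmi, hadjc, hwZ, hwF, hfi⟩ | ⟨r, hmi, hfi⟩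
          · rw [hmi]
            constructor
            · intro hmem
              rcases Sym2.mem_iff.mp hmem with h | h
              · exact hZne i j c (x j) hij hc (Or.inl rfl) h.symm
              · exact hwZ (by rw [← h]; exact hxZ j)
            · intro hmem
              rcases Sym2.mem_iff.mp hmem with h | h
              · exact hZne i j c (y j) hij hc (Or.inr rfl) h.symm
              · exact hwZ (by rw [← h]; exact hyZ j)
          · rw [hmi]
            exact ⟨fun h => hZfree r (x j) h (hxZ j), fun h => hZfree r (y j) h (hyZ j)⟩
  exact main k 0 (fun r => r.elim0) (by omega) (fun r => r.elim0) (fun r => r.elim0)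
    (fun r => r.elim0)
end

section
/- Let G be a graph and let (A,B) be a nice partition of G induced by a minimum odd cycle cover X of G. Then |X| = τ(G_{A,B}), the vertex cover number of G_{A,B}. -/
universe u

variable {V : Type u}

theorem stmt12 {V : Type u} [Fintype V] (G : SimpleGraph V) (X A B : Set V)
    (hAB : A ∪ B = Set.univ) (hdisj : Disjoint A B)
    (hmin : IsMinOddCycleCover G X) (hind : InducesPartition G X A B) :
    X.ncard = vcNumber (sideGraph G A B) := by
  have hXvc : IsVertexCover (sideGraph G A B) X := by
    intro e he
    induction e using Sym2.ind with
    | _ u v =>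
      rw [SimpleGraph.mem_edgeSet] at he
      by_contra h
      push_neg at h
      have hu : u ∉ X := fun hu => h u hu (by simp)
      have hv : v ∉ X := fun hv => h v hv (by simp)
      obtain ⟨h1, h2⟩ := hind.1 u v he.1 hu hv
      rcases he.2 with hA | hB
      · exact h1 hA
      · exact h2 hB
  have key : ∀ C : Set V, IsVertexCover (sideGraph G A B) C → X.ncard ≤ C.ncard := by
    intro C hC
    apply hmin.2
    classical
    refine ⟨SimpleGraph.Coloring.mk (fun v => if (v : V) ∈ A then 0 else 1) ?_⟩
    intro u v hadj
    have hGadj : G.Adj (u : V) (v : V) := hadj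
    have hnAA : ¬((u : V) ∈ A ∧ (v : V) ∈ A) := by
      rintro ⟨ha, hb⟩
      obtain ⟨w, hwC, hwe⟩ := hC s(u.1, v.1)
        (by rw [SimpleGraph.mem_edgeSet]; exact ⟨hGadj, Or.inl ⟨ha, hb⟩⟩)
      rcases Sym2.mem_iff.mp hwe with rfl | rfl
      · exact u.2 hwC
      · exact v.2 hwC
    have hnBB : ¬((u : V) ∈ B ∧ (v : V) ∈ B) := by
      rintro ⟨ha, hb⟩
      obtain ⟨w, hwC, hwe⟩ := hC s(u.1, v.1)
        (by rw [SimpleGraph.mem_edgeSet]; exact ⟨hGadj, Or.inr ⟨ha, hb⟩⟩)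
      rcases Sym2.mem_iff.mp hwe with rfl | rfl
      · exact u.2 hwC
      · exact v.2 hwC
    have hmemu : (u : V) ∈ A ∨ (u : V) ∈ B := by
      have := Set.mem_univ (u : V); rw [← hAB] at this; exact this
    have hmemv : (v : V) ∈ A ∨ (v : V) ∈ B := by
      have := Set.mem_univ (v : V); rw [← hAB] at this; exact this
    show (if (u : V) ∈ A then (0 : Fin 2) else 1) ≠ (if (v : V) ∈ A then 0 else 1)
    by_cases huA : (u : V) ∈ A <;> by_cases hvA : (v : V) ∈ A
    · exact absurd ⟨huA, hvA⟩ hnAA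
    · rw [if_pos huA, if_neg hvA]; exact Fin.zero_ne_one
    · rw [if_neg huA, if_pos hvA]; exact Fin.zero_ne_one.symm
    · exact absurd ⟨hmemu.resolve_left huA, hmemv.resolve_left hvA⟩ hnBB
  rw [vcNumber]
  apply le_antisymm
  · refine le_csInf ⟨X.ncard, ⟨X, hXvc, rfl⟩⟩ ?_
    rintro n ⟨C, hC, rfl⟩
    exact key C hC
  · exact Nat.sInf_le ⟨X, hXvc, rfl⟩
end
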